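/- Let r1 > r2 ≥ 1 with r2 ≥ 1 and let f be the three-worker reset map. For every (x,y) ∈ △ not equal to the fixed point p* = (r1/(r1+r2+1), (r1+r2)/(r1+r2+1)), there exists k ≥ 0 such that fᵏ(x,y) has first coordinate 0 (i.e., the orbit reaches a point of the form (0,y')). -/

import Mathlib

open Classical in
/-- The piecewise reset map of a three-worker bucket brigade with constant normalized
velocities `r1 = v1/v3` and `r2 = v2/v3`. -/
noncomputable def resetMap (r1 r2 : ℝ) : ℝ × ℝ → ℝ × ℝ := fun p =>
  if 1 ≤ min (p.1 + (1 - p.2) * r2) ((1 - p.2) * r1) then (1, 1)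
  else if (1 - p.2) * r1 < 1 ∧ 1 ≤ p.1 + (1 - p.2) * r2 then (r1 * (1 - p.2), 1)
  else if p.1 + (1 - p.2) * r2 < min 1 ((1 - p.2) * r1) then
    (p.1 + (1 - p.2) * r2, p.1 + (1 - p.2) * r2)
  else (r1 * (1 - p.2), p.1 + r2 * (1 - p.2))

namespace BBaux

def inTri (p : ℝ × ℝ) : Prop := 0 ≤ p.1 ∧ p.1 ≤ p.2 ∧ p.2 ≤ 1

variable {r1 r2 : ℝ}

lemma f11 : resetMap r1 r2 (1, 1) = (0, 1) := by
  unfold resetMap; norm_num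

lemma fw1 {w : ℝ} (h0 : 0 ≤ w) (h1 : w < 1) :
    resetMap r1 r2 (w, 1) = (0, w) := by
  unfold resetMap
  dsimp only
  split_ifs with hA hB hC
  · have := hA.trans (min_le_right _ _); norm_num at this
  · norm_num at hB; linarith
  · norm_num at hC; linarith
  · norm_num

/-- in the "else" branch region -/
lemma else_region (hp : inTri p)
    (hA : ¬ 1 ≤ min (p.1 + (1 - p.2) * r2) ((1 - p.2) * r1))
    (hB : ¬ ((1 - p.2) * r1 < 1 ∧ 1 ≤ p.1 + (1 - p.2) * r2))
    (hC : ¬ (p.1 + (1 - p.2) * r2 < min 1 ((1 - p.2) * r1))) :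
    (1 - p.2) * r1 ≤ p.1 + (1 - p.2) * r2 ∧ p.1 + (1 - p.2) * r2 < 1 := by
  push_neg at hA hC
  rw [min_lt_iff] at hA
  rw [min_le_iff] at hC
  rw [not_and_or, not_lt, not_le] at hB
  rcases hA with h | h <;> rcases hC with h' | h' <;> rcases hB with h'' | h'' <;>
    exact ⟨by linarith, by linarith⟩

/-- invariance of the simplex -/
lemma inv (hr2 : 1 ≤ r2) (hr21 : r2 < r1) {p : ℝ × ℝ} (hp : inTri p) :
    inTri (resetMap r1 r2 p) := by
  obtain ⟨h0, h1, h2⟩ := hp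
  have hr1 : (1:ℝ) < r1 := lt_of_le_of_lt hr2 hr21
  have ha0 : 0 ≤ p.1 + (1 - p.2) * r2 := by nlinarith
  have hb0 : 0 ≤ (1 - p.2) * r1 := by nlinarith
  unfold resetMap
  split_ifs with hA hB hC
  · exact ⟨by norm_num, by norm_num, by norm_num⟩
  · refine ⟨?_, ?_, le_refl 1⟩ <;> dsimp only <;> nlinarith [hB.1]
  · refine ⟨ha0, le_refl _, ?_⟩
    exact le_of_lt (lt_of_lt_of_le hC (min_le_left _ _))
  · obtain ⟨hba, ha1⟩ := else_region ⟨h0, h1, h2⟩ hA hB hC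
    exact ⟨by dsimp only; nlinarith, by dsimp only; linarith [hba], le_of_lt (by dsimp only; linarith)⟩

end BBaux

namespace BBaux
variable {r1 r2 : ℝ}

lemma reach (hr2 : 1 ≤ r2) (hr21 : r2 < r1) {p : ℝ × ℝ} (hp : inTri p) :
    resetMap r1 r2 p = (r1 * (1 - p.2), p.1 + r2 * (1 - p.2)) ∨
    ∃ j ≤ 3, ((resetMap r1 r2)^[j] p).1 = 0 := by
  obtain ⟨h0, h1, h2⟩ := hp
  have hr1 : (1:ℝ) < r1 := lt_of_le_of_lt hr2 hr21
  by_cases hA : 1 ≤ min (p.1 + (1 - p.2) * r2) ((1 - p.2) * r1)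
  · have e1 : resetMap r1 r2 p = (1, 1) := by unfold resetMap; rw [if_pos hA]
    refine Or.inr ⟨2, by norm_num, ?_⟩
    show (resetMap r1 r2 (resetMap r1 r2 p)).1 = 0
    rw [e1, f11]
  · by_cases hB : (1 - p.2) * r1 < 1 ∧ 1 ≤ p.1 + (1 - p.2) * r2
    · have e1 : resetMap r1 r2 p = (r1 * (1 - p.2), 1) := by
        unfold resetMap; rw [if_neg hA, if_pos hB]
      have hw0 : 0 ≤ r1 * (1 - p.2) := by nlinarith
      have hw1 : r1 * (1 - p.2) < 1 := by rw [mul_comm]; exact hB.1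
      refine Or.inr ⟨2, by norm_num, ?_⟩
      show (resetMap r1 r2 (resetMap r1 r2 p)).1 = 0
      rw [e1, fw1 hw0 hw1]
    · by_cases hC : p.1 + (1 - p.2) * r2 < min 1 ((1 - p.2) * r1)
      · set a := p.1 + (1 - p.2) * r2 with hadef
        have ha0 : 0 ≤ a := by rw [hadef]; nlinarith
        have ha1 : a < 1 := lt_of_lt_of_le hC (min_le_left _ _)
        have e1 : resetMap r1 r2 p = (a, a) := by
          unfold resetMap; rw [if_neg hA, if_neg hB, if_pos hC]
        have ha' : 1 ≤ a + (1 - a) * r2 := by nlinarith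
        by_cases hD : 1 ≤ (1 - a) * r1
        · have e2 : resetMap r1 r2 (a, a) = (1, 1) := by
            unfold resetMap; dsimp only
            rw [if_pos (le_min ha' hD)]
          refine Or.inr ⟨3, by norm_num, ?_⟩
          show (resetMap r1 r2 (resetMap r1 r2 (resetMap r1 r2 p))).1 = 0
          rw [e1, e2, f11]
        · push_neg at hD
          have e2 : resetMap r1 r2 (a, a) = (r1 * (1 - a), 1) := by
            unfold resetMap; dsimp only
            rw [if_neg, if_pos ⟨hD, ha'⟩]
            intro h
            exact absurd (le_trans h (min_le_right _ _)) (not_le.mpr hD)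
          have hw0 : 0 ≤ r1 * (1 - a) := by nlinarith
          have hw1 : r1 * (1 - a) < 1 := by rw [mul_comm]; exact hD
          refine Or.inr ⟨3, by norm_num, ?_⟩
          show (resetMap r1 r2 (resetMap r1 r2 (resetMap r1 r2 p))).1 = 0
          rw [e1, e2, fw1 hw0 hw1]
      · exact Or.inl (by unfold resetMap; rw [if_neg hA, if_neg hB, if_neg hC])

end BBaux

namespace BBaux

lemma gap {r1 r2 : ℝ} (hr2 : 1 ≤ r2) (hr21 : r2 < r1) {a b : ℝ}
    (h : b^2 + r2 * a * b + r1 * a^2 = 0) :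
    (1 + min 1 ((r1 - r2)/r2)) * |a| ≤ |b| := by
  have hr2' : (0:ℝ) < r2 := by linarith
  have hr1 : (1:ℝ) < r1 := lt_of_le_of_lt hr2 hr21
  rcases eq_or_ne a 0 with rfl | ha
  · have hb : b = 0 := by nlinarith [sq_nonneg b]
    simp [hb]
  · have hA : 0 < |a| := abs_pos.mpr ha
    by_contra hlt
    push_neg at hlt
    have hab : -(|a| * |b|) ≤ a * b := by
      rw [← abs_mul]; exact neg_abs_le (a * b)
    have h1 : r1 * |a|^2 ≤ r2 * (|a| * |b|) := by
      nlinarith [sq_abs a, sq_abs b, sq_nonneg b]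
    have h2 : r1 * |a| ≤ r2 * |b| := by nlinarith [hA]
    rcases le_total ((r1 - r2)/r2) 1 with hm | hm
    · rw [min_eq_right hm] at hlt
      have hc : r2 * (1 + (r1 - r2)/r2) = r1 := by field_simp; ring
      nlinarith [hlt, h2, hA]
    · rw [min_eq_left hm] at hlt
      have h3 : 2 * r2 ≤ r1 := by
        have := (le_div_iff₀ hr2').mp hm; linarith
      nlinarith [hlt, h2, hA]

end BBaux


/-- For `r1 > r2 ≥ 1`, every point of the simplex other than the fixed point
`p* = (r1/(r1+r2+1), (r1+r2)/(r1+r2+1))` has an iterate under the reset map whose first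
coordinate is `0`. -/
theorem orbit_reaches_axis (r1 r2 : ℝ) (hr2 : 1 ≤ r2) (hr21 : r2 < r1)
    (x y : ℝ) (hxy : 0 ≤ x ∧ x ≤ y ∧ y ≤ 1)
    (hne : (x, y) ≠ (r1 / (r1 + r2 + 1), (r1 + r2) / (r1 + r2 + 1))) :
    ∃ k : ℕ, ((resetMap r1 r2)^[k] (x, y)).1 = 0 := by
  by_contra hcon
  push_neg at hcon
  set f := resetMap r1 r2 with hf
  have hr1 : (1:ℝ) < r1 := lt_of_le_of_lt hr2 hr21
  have hS : (0:ℝ) < r1 + r2 + 1 := by linarith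
  have hTri : ∀ k, BBaux.inTri (f^[k] (x, y)) := by
    intro k
    induction k with
    | zero => simpa [BBaux.inTri] using hxy
    | succ n ih => rw [Function.iterate_succ_apply']; exact BBaux.inv hr2 hr21 ih
  have hstep : ∀ k, f^[k+1] (x, y) =
      (r1 * (1 - (f^[k] (x, y)).2), (f^[k] (x, y)).1 + r2 * (1 - (f^[k] (x, y)).2)) := by
    intro k
    rcases BBaux.reach hr2 hr21 (hTri k) with he | ⟨j, _, hj⟩
    · rw [Function.iterate_succ_apply']; exact he
    · exact absurd (by rw [Function.iterate_add_apply]; exact hj) (hcon (j + k))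
  set ys := (r1 + r2) / (r1 + r2 + 1) with hys
  set v : ℕ → ℝ := fun k => (f^[k] (x, y)).2 - ys with hv
  have hX : ∀ k, (f^[k+1] (x, y)).1 = r1 * (1 - (f^[k] (x, y)).2) := fun k => by rw [hstep k]
  have hY : ∀ k, (f^[k+1] (x, y)).2 = (f^[k] (x, y)).1 + r2 * (1 - (f^[k] (x, y)).2) :=
    fun k => by rw [hstep k]
  have hrec : ∀ k, v (k+1+1) + r2 * v (k+1) + r1 * v k = 0 := by
    intro k
    simp only [hv]
    rw [hY (k+1), hX k, hys]
    field_simp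
    ring
  set V : ℕ → ℝ := fun k => v (k+1)^2 + r2 * v k * v (k+1) + r1 * v k^2 with hV
  have hVstep : ∀ k, V (k+1) = r1 * V k := by
    intro k
    simp only [hV]
    linear_combination (v (k+1+1) - r1 * v k) * hrec k
  have hVpow : ∀ k, V k = r1^k * V 0 := by
    intro k
    induction k with
    | zero => simp
    | succ n ih => rw [hVstep n, ih, pow_succ]; ring
  have hys0 : 0 ≤ ys := by positivity
  have hys1 : ys ≤ 1 := by rw [hys, div_le_one hS]; linarith
  have hvb : ∀ k, |v k| ≤ 1 := by
    intro k
    obtain ⟨a1, a2, a3⟩ := hTri k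
    rw [abs_le]; constructor <;> simp only [hv] <;> linarith
  have hVb : ∀ k, |V k| ≤ 1 + r2 + r1 := by
    intro k
    have a := abs_le.mp (hvb k)
    have b := abs_le.mp (hvb (k+1))
    rw [abs_le]
    constructor <;> simp only [hV] <;>
      nlinarith [mul_nonneg (by linarith [a.2] : (0:ℝ) ≤ 1 - v k) (by linarith [a.1] : (0:ℝ) ≤ 1 + v k),
        mul_nonneg (by linarith [b.2] : (0:ℝ) ≤ 1 - v (k+1)) (by linarith [b.1] : (0:ℝ) ≤ 1 + v (k+1)),
        mul_nonneg (by linarith [a.2] : (0:ℝ) ≤ 1 - v k) (by linarith [b.1] : (0:ℝ) ≤ 1 + v (k+1)),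
        mul_nonneg (by linarith [a.1] : (0:ℝ) ≤ 1 + v k) (by linarith [b.2] : (0:ℝ) ≤ 1 - v (k+1)),
        mul_nonneg (by linarith [a.2] : (0:ℝ) ≤ 1 - v k) (by linarith [b.2] : (0:ℝ) ≤ 1 - v (k+1)),
        mul_nonneg (by linarith [a.1] : (0:ℝ) ≤ 1 + v k) (by linarith [b.1] : (0:ℝ) ≤ 1 + v (k+1)),
        sq_nonneg (v k), sq_nonneg (v (k+1)), hr2, hr1.le]
  have hV0 : V 0 = 0 := by
    by_contra h0
    have habs : 0 < |V 0| := abs_pos.mpr h0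
    obtain ⟨n, hn⟩ := pow_unbounded_of_one_lt ((1 + r2 + r1) / |V 0|) hr1
    rw [div_lt_iff₀ habs] at hn
    have h2 : |V n| = r1^n * |V 0| := by
      rw [hVpow n, abs_mul, abs_pow, abs_of_pos (by linarith : (0:ℝ) < r1)]
    linarith [hVb n]
  have hVall : ∀ k, V k = 0 := fun k => by rw [hVpow k, hV0, mul_zero]
  set c := 1 + min 1 ((r1 - r2)/r2) with hc
  have hgrow : ∀ k, c * |v k| ≤ |v (k+1)| := by
    intro k
    exact BBaux.gap hr2 hr21 (hVall k)
  have hc1 : 1 < c := by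
    rw [hc]
    have : (0:ℝ) < min 1 ((r1 - r2)/r2) := lt_min (by norm_num) (div_pos (by linarith) (by linarith))
    linarith
  have hc0 : 0 < c := by linarith
  have hpow : ∀ k, c^k * |v 0| ≤ |v k| := by
    intro k
    induction k with
    | zero => simp
    | succ n ih =>
      calc c^(n+1) * |v 0| = c * (c^n * |v 0|) := by ring
        _ ≤ c * |v n| := by nlinarith [abs_nonneg (v 0)]
        _ ≤ |v (n+1)| := hgrow n
  have hv0 : v 0 = 0 := by
    by_contra h0
    have habs : 0 < |v 0| := abs_pos.mpr h0
    obtain ⟨n, hn⟩ := pow_unbounded_of_one_lt (1 / |v 0|) hc1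
    rw [div_lt_iff₀ habs] at hn
    linarith [hpow n, hvb n]
  have hv1 : v 1 = 0 := by
    have h0 := hVall 0
    simp only [hV] at h0
    rw [hv0] at h0
    have : v 1 ^ 2 = 0 := by linarith [sq_nonneg (v 1)]
    exact pow_eq_zero_iff (by norm_num) |>.mp this
  -- conclude (x, y) is the fixed point
  have hy : y = ys := by
    have := hv0
    simp only [hv, Function.iterate_zero_apply] at this
    linarith
  have hx : x = r1 / (r1 + r2 + 1) := by
    have h1 := hv1
    simp only [hv] at h1
    rw [hY 0] at h1
    simp only [Function.iterate_zero_apply] at h1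
    rw [hy, hys] at h1
    field_simp at h1 ⊢
    linarith
  exact hne (by rw [hx, hy, hys])
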